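/- arXiv:1309.0662 — 10 statements merged into one kernel-verified Lean document; each statement's English description precedes it below -/
import Mathlib

section
/- Let G be a group and suppose there exist normal subgroups H, K, L of G such that H ⊓ K = H ⊓ L = K ⊓ L = ⊥ (the trivial subgroup) and H ⊔ K = H ⊔ L = K ⊔ L = ⊤ (the whole group), where ⊓ and ⊔ are taken in the lattice of subgroups of G. Then G is commutative. -/
/-- If the lattice of normal subgroups of a group `G` contains a copy of `M₃` as a
`(0,1)`-sublattice (witnessed by normal subgroups `H, K, L` with pairwise meets `⊥` and
pairwise joins `⊤`), then `G` is commutative. -/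
theorem comm_of_M3_in_normal_subgroup_lattice {G : Type*} [Group G]
    (H K L : Subgroup G) [H.Normal] [K.Normal] [L.Normal]
    (hHK : H ⊓ K = ⊥) (hHL : H ⊓ L = ⊥) (hKL : K ⊓ L = ⊥)
    (hHK' : H ⊔ K = ⊤) (hHL' : H ⊔ L = ⊤) (hKL' : K ⊔ L = ⊤) :
    ∀ a b : G, a * b = b * a := by
  -- pairwise commuting between distinct subgroups
  have cHK := Subgroup.commute_of_normal_of_disjoint H K ‹_› ‹_› (disjoint_iff.mpr hHK)
  have cHL := Subgroup.commute_of_normal_of_disjoint H L ‹_› ‹_› (disjoint_iff.mpr hHL)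
  have cKL := Subgroup.commute_of_normal_of_disjoint K L ‹_› ‹_› (disjoint_iff.mpr hKL)
  -- decomposition: every g is a product from two subgroups
  have decKL : ∀ g : G, ∃ k ∈ K, ∃ l ∈ L, g = k * l := by
    intro g
    have : g ∈ K ⊔ L := hKL' ▸ Subgroup.mem_top g
    rw [← SetLike.mem_coe, Subgroup.normal_mul] at this
    obtain ⟨k, hk, l, hl, h⟩ := this
    exact ⟨k, hk, l, hl, h.symm⟩
  have decHL : ∀ g : G, ∃ h ∈ H, ∃ l ∈ L, g = h * l := by
    intro g
    have : g ∈ H ⊔ L := hHL' ▸ Subgroup.mem_top g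
    rw [← SetLike.mem_coe, Subgroup.normal_mul] at this
    obtain ⟨x, hx, l, hl, h⟩ := this
    exact ⟨x, hx, l, hl, h.symm⟩
  -- H is central
  have hHc : ∀ x ∈ H, ∀ g : G, x * g = g * x := by
    intro x hx g
    obtain ⟨k, hk, l, hl, rfl⟩ := decKL g
    calc x * (k * l) = k * x * l := by rw [← mul_assoc, cHK x k hx hk]
    _ = k * l * x := by rw [mul_assoc, cHL x l hx hl, mul_assoc]
  -- K is central
  have hKc : ∀ x ∈ K, ∀ g : G, x * g = g * x := by
    intro x hx g
    obtain ⟨h, hh, l, hl, rfl⟩ := decHL g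
    calc x * (h * l) = h * x * l := by rw [← mul_assoc, ← cHK h x hh hx]
    _ = h * l * x := by rw [mul_assoc, cKL x l hx hl, mul_assoc]
  intro a b
  have ha : a ∈ H ⊔ K := hHK' ▸ Subgroup.mem_top a
  rw [← SetLike.mem_coe, Subgroup.normal_mul] at ha
  obtain ⟨h, hh, k, hk, rfl⟩ := ha
  rw [mul_assoc, hKc k hk b, ← mul_assoc, hHc h hh b, mul_assoc]
end

section
/- A group G is commutative if and only if there exist normal subgroups H, K, L of the product group G × G such that H ⊓ K = H ⊓ L = K ⊓ L = ⊥ and H ⊔ K = H ⊔ L = K ⊔ L = ⊤ in the lattice of subgroups of G × G. -/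
open scoped Pointwise
open scoped commutatorElement

/-- Elements of normal subgroups with trivial intersection commute. -/
lemma comm_of_disjoint_normal {G : Type*} [Group G] {H K : Subgroup G}
    (hH : H.Normal) (hK : K.Normal) (hHK : H ⊓ K = ⊥)
    {h k : G} (hh : h ∈ H) (hk : k ∈ K) : h * k = k * h := by
  rw [← commutatorElement_eq_one_iff_mul_comm]
  have c1 : ⁅h, k⁆ ∈ H := by
    have : h * (k * h⁻¹ * k⁻¹) ∈ H :=
      H.mul_mem hh (by simpa [mul_assoc] using hH.conj_mem h⁻¹ (inv_mem hh) k)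
    simpa [commutatorElement_def, mul_assoc] using this
  have c2 : ⁅h, k⁆ ∈ K := by
    have : (h * k * h⁻¹) * k⁻¹ ∈ K := K.mul_mem (hK.conj_mem k hk h) (inv_mem hk)
    simpa [commutatorElement_def] using this
  have : ⁅h, k⁆ ∈ H ⊓ K := ⟨c1, c2⟩
  rwa [hHK, Subgroup.mem_bot] at this

/-- A group `G` is commutative iff there are normal subgroups `H, K, L` of `G × G`
forming a copy of `M₃` (with `0` and `1`) in the lattice of subgroups of `G × G`:
pairwise meets are `⊥` and pairwise joins are `⊤`. -/
theorem comm_iff_M3_in_normal_subgroup_lattice_of_square {G : Type*} [Group G] :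
    (∀ a b : G, a * b = b * a) ↔
      ∃ H K L : Subgroup (G × G), H.Normal ∧ K.Normal ∧ L.Normal ∧
        H ⊓ K = ⊥ ∧ H ⊓ L = ⊥ ∧ K ⊓ L = ⊥ ∧
        H ⊔ K = ⊤ ∧ H ⊔ L = ⊤ ∧ K ⊔ L = ⊤ := by
  constructor
  · intro hcomm
    have hGG : ∀ x y : G × G, x * y = y * x := by
      intro x y
      ext <;> simp [hcomm]
    refine ⟨Subgroup.prod ⊥ ⊤, Subgroup.prod ⊤ ⊥,
      ((MonoidHom.id G).prod (MonoidHom.id G)).range, ?_, ?_, ?_, ?_, ?_, ?_, ?_, ?_, ?_⟩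
    · exact ⟨fun n hn g => by rw [hGG g n, mul_assoc, mul_inv_cancel, mul_one]; exact hn⟩
    · exact ⟨fun n hn g => by rw [hGG g n, mul_assoc, mul_inv_cancel, mul_one]; exact hn⟩
    · exact ⟨fun n hn g => by rw [hGG g n, mul_assoc, mul_inv_cancel, mul_one]; exact hn⟩
    · ext ⟨a, b⟩
      simp [Subgroup.mem_prod, Prod.ext_iff]
    · ext ⟨a, b⟩
      constructor
      · rintro ⟨hab, g, hg⟩
        obtain ⟨ha1, -⟩ := Subgroup.mem_prod.mp hab
        simp only [MonoidHom.prod_apply, MonoidHom.id_apply, Prod.ext_iff] at hg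
        have : a = 1 := Subgroup.mem_bot.mp ha1
        have hb : b = 1 := by rw [← hg.2, hg.1, this]
        simp [Subgroup.mem_bot, Prod.ext_iff, this, hb]
      · intro hmem
        rw [Subgroup.mem_bot] at hmem
        rw [hmem]
        exact one_mem _
    · ext ⟨a, b⟩
      constructor
      · rintro ⟨hab, g, hg⟩
        obtain ⟨-, hb1⟩ := Subgroup.mem_prod.mp hab
        simp only [MonoidHom.prod_apply, MonoidHom.id_apply, Prod.ext_iff] at hg
        have : b = 1 := Subgroup.mem_bot.mp hb1
        have ha : a = 1 := by rw [← hg.1, hg.2, this]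
        simp [Subgroup.mem_bot, Prod.ext_iff, this, ha]
      · intro hmem
        rw [Subgroup.mem_bot] at hmem
        rw [hmem]
        exact one_mem _
    · rw [eq_top_iff]
      rintro ⟨a, b⟩ -
      have h1 : (a, b) = (1, b) * (a, 1) := by simp [Prod.ext_iff]
      rw [h1]
      exact mul_mem
        (Subgroup.mem_sup_left (Subgroup.mem_prod.mpr ⟨Subgroup.mem_bot.mpr rfl, trivial⟩))
        (Subgroup.mem_sup_right (Subgroup.mem_prod.mpr ⟨trivial, Subgroup.mem_bot.mpr rfl⟩))
    · rw [eq_top_iff]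
      rintro ⟨a, b⟩ -
      have h1 : (a, b) = (1, b * a⁻¹) * (a, a) := by simp [Prod.ext_iff]
      rw [h1]
      exact mul_mem
        (Subgroup.mem_sup_left (Subgroup.mem_prod.mpr ⟨Subgroup.mem_bot.mpr rfl, trivial⟩))
        (Subgroup.mem_sup_right ⟨a, rfl⟩)
    · rw [eq_top_iff]
      rintro ⟨a, b⟩ -
      have h1 : (a, b) = (a * b⁻¹, 1) * (b, b) := by simp [Prod.ext_iff]
      rw [h1]
      exact mul_mem
        (Subgroup.mem_sup_left (Subgroup.mem_prod.mpr ⟨trivial, Subgroup.mem_bot.mpr rfl⟩))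
        (Subgroup.mem_sup_right ⟨b, rfl⟩)
  · rintro ⟨H, K, L, hH, hK, hL, hHK, hHL, hKL, sHK, sHL, sKL⟩
    have decomp : ∀ (A B : Subgroup (G × G)), A.Normal → B.Normal → A ⊔ B = ⊤ →
        ∀ x : G × G, ∃ a ∈ A, ∃ b ∈ B, x = a * b := by
      intro A B hA hB hAB x
      haveI := hB
      have : x ∈ (A : Set (G × G)) * (B : Set (G × G)) := by
        rw [← Subgroup.mul_normal A B, hAB]; trivial
      obtain ⟨a, ha, b, hb, h⟩ := this
      exact ⟨a, ha, b, hb, h.symm⟩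
    have hLK : L ⊓ K = ⊥ := by rw [inf_comm]; exact hKL
    have hLcent : ∀ l ∈ L, ∀ x : G × G, l * x = x * l := by
      intro l hl x
      obtain ⟨h, hh, k, hk, rfl⟩ := decomp H K hH hK sHK x
      calc l * (h * k) = l * h * k := (mul_assoc _ _ _).symm
        _ = h * l * k := by rw [comm_of_disjoint_normal hH hL hHL hh hl]
        _ = h * (k * l) := by rw [mul_assoc, comm_of_disjoint_normal hL hK hLK hl hk]
        _ = h * k * l := (mul_assoc _ _ _).symm
    have hHcent : ∀ h ∈ H, ∀ x : G × G, h * x = x * h := by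
      intro h hh x
      obtain ⟨k, hk, l, hl, rfl⟩ := decomp K L hK hL sKL x
      calc h * (k * l) = h * k * l := (mul_assoc _ _ _).symm
        _ = k * h * l := by rw [comm_of_disjoint_normal hH hK hHK hh hk]
        _ = k * (l * h) := by rw [mul_assoc, comm_of_disjoint_normal hH hL hHL hh hl]
        _ = k * l * h := (mul_assoc _ _ _).symm
    have hall : ∀ x y : G × G, x * y = y * x := by
      intro x y
      obtain ⟨h, hh, l, hl, rfl⟩ := decomp H L hH hL sHL x
      rw [mul_assoc, hLcent l hl y, ← mul_assoc, hHcent h hh y, mul_assoc]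
    intro a b
    have h := hall (a, 1) (b, 1)
    rw [Prod.mk_mul_mk, Prod.mk_mul_mk, Prod.ext_iff] at h
    exact h.1
end

section
/- A group G is commutative if and only if every subgroup of the product group G × G is a normal subgroup of G × G. -/
/-- A group `G` is commutative iff every subgroup of the product group `G × G`
is a normal subgroup of `G × G`. -/
theorem comm_iff_all_subgroups_of_square_normal {G : Type*} [Group G] :
    (∀ a b : G, a * b = b * a) ↔ ∀ S : Subgroup (G × G), S.Normal := by
  constructor
  · intro h S
    constructor
    intro n hn g
    have hc : ∀ x y : G × G, x * y = y * x := by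
      intro x y
      ext
      · exact h x.1 y.1
      · exact h x.2 y.2
    rw [hc (g*n) g⁻¹, inv_mul_cancel_left]
    exact hn
  · intro h a b
    -- diagonal subgroup
    set D : Subgroup (G × G) := ((MonoidHom.id G).prod (MonoidHom.id G)).range with hD
    have hb : (b, b) ∈ D := ⟨b, rfl⟩
    have := (h D).conj_mem _ hb (a, 1)
    obtain ⟨x, hx⟩ := this
    simp only [MonoidHom.coe_prod, MonoidHom.id_apply, Prod.mk_mul_mk, Prod.mk.injEq,
      Prod.ext_iff] at hx
    have h1 : x = a * b * a⁻¹ := by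
      have := hx.1
      simpa using this
    have h2 : x = b := by
      have := hx.2
      simpa using this
    have : a * b * a⁻¹ = b := by rw [← h1, h2]
    calc a * b = a * b * a⁻¹ * a := by group
    _ = b * a := by rw [this]
end

section
/- Let R be a non-unital ring and suppose there exist two-sided ideals I, J, K of R such that I ⊓ J = I ⊓ K = J ⊓ K = ⊥ and I ⊔ J = I ⊔ K = J ⊔ K = ⊤ in the lattice of two-sided ideals of R. Then R is a zeroring (i.e. r * s = 0 for all r, s ∈ R). -/
/-- If the lattice of two-sided ideals of a non-unital ring `R` contains a copy of `M₃`
as a `(0,1)`-sublattice (witnessed by ideals `I, J, K` with pairwise meets `⊥` and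
pairwise joins `⊤`), then `R` is a zeroring: `r * s = 0` for all `r, s ∈ R`. -/
theorem zeroring_of_M3_in_ideal_lattice {R : Type*} [NonUnitalRing R]
    (I J K : TwoSidedIdeal R)
    (hIJ : I ⊓ J = ⊥) (hIK : I ⊓ K = ⊥) (hJK : J ⊓ K = ⊥)
    (hIJ' : I ⊔ J = ⊤) (hIK' : I ⊔ K = ⊤) (hJK' : J ⊔ K = ⊤) :
    ∀ r s : R, r * s = 0 := by
  -- products across distinct ideals vanish
  have hz : ∀ {A B : TwoSidedIdeal R}, A ⊓ B = ⊥ → ∀ {a b : R}, a ∈ A → b ∈ B → a * b = 0 := by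
    intro A B hAB a b ha hb
    have : a * b ∈ A ⊓ B :=
      ⟨A.mul_mem_right _ _ ha, B.mul_mem_left _ _ hb⟩
    rwa [hAB, TwoSidedIdeal.mem_bot] at this
  intro r s
  obtain ⟨i₁, hi₁, j₁, hj₁, hr₁⟩ := TwoSidedIdeal.mem_sup.mp (hIJ' ▸ TwoSidedIdeal.mem_top (x := r))
  obtain ⟨i₂, hi₂, k₂, hk₂, hs₂⟩ := TwoSidedIdeal.mem_sup.mp (hIK' ▸ TwoSidedIdeal.mem_top (x := s))
  obtain ⟨j₃, hj₃, k₃, hk₃, hs₃⟩ := TwoSidedIdeal.mem_sup.mp (hJK' ▸ TwoSidedIdeal.mem_top (x := s))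
  -- r * s ∈ I
  have hI : r * s ∈ I := by
    have : r * s = i₁ * i₂ := by
      have hJI : J ⊓ I = ⊥ := by rw [inf_comm]; exact hIJ
      rw [← hr₁, ← hs₂, add_mul, mul_add, mul_add,
        hz hIK hi₁ hk₂, hz hJI hj₁ hi₂, hz hJK hj₁ hk₂]
      abel
    rw [this]; exact I.mul_mem_right _ _ hi₁
  -- r * s ∈ J
  have hJ : r * s ∈ J := by
    have : r * s = j₁ * j₃ := by
      rw [← hr₁, ← hs₃, add_mul, mul_add, mul_add,
        hz hIJ hi₁ hj₃, hz hIK hi₁ hk₃, hz hJK hj₁ hk₃]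
      abel
    rw [this]; exact J.mul_mem_right _ _ hj₁
  have : r * s ∈ I ⊓ J := ⟨hI, hJ⟩
  rwa [hIJ, TwoSidedIdeal.mem_bot] at this
end

section
/- A non-unital ring R is a zeroring (i.e. r * s = 0 for all r, s ∈ R) if and only if there exist two-sided ideals I, J, K of the product ring R × R such that I ⊓ J = I ⊓ K = J ⊓ K = ⊥ and I ⊔ J = I ⊔ K = J ⊔ K = ⊤ in the lattice of two-sided ideals of R × R. -/
/-- A non-unital ring `R` is a zeroring (`r * s = 0` for all `r, s`) iff there exist
two-sided ideals `I, J, K` of the product ring `R × R` forming a copy of `M₃` (with `0`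
and `1`) in the lattice of two-sided ideals of `R × R`: pairwise meets are `⊥` and
pairwise joins are `⊤`. -/
theorem zeroring_iff_M3_in_ideal_lattice_of_square {R : Type*} [NonUnitalRing R] :
    (∀ r s : R, r * s = 0) ↔
      ∃ I J K : TwoSidedIdeal (R × R),
        I ⊓ J = ⊥ ∧ I ⊓ K = ⊥ ∧ J ⊓ K = ⊥ ∧
        I ⊔ J = ⊤ ∧ I ⊔ K = ⊤ ∧ J ⊔ K = ⊤ := by
  constructor
  · intro h
    have hz : ∀ a b : R × R, a * b = 0 := by
      rintro ⟨a1, a2⟩ ⟨b1, b2⟩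
      ext <;> simp [h]
    let mkI : ∀ (s : Set (R × R)), (0 : R × R) ∈ s → (∀ {x y}, x ∈ s → y ∈ s → x + y ∈ s) →
        (∀ {x}, x ∈ s → -x ∈ s) → TwoSidedIdeal (R × R) :=
      fun s h0 hadd hneg => TwoSidedIdeal.mk' s h0 hadd hneg
        (fun {x y} _ => by rw [hz x y]; exact h0)
        (fun {x y} _ => by rw [hz x y]; exact h0)
    refine ⟨mkI {p | p.2 = 0} rfl (fun hx hy => by simp_all) (fun hx => by simp_all),
            mkI {p | p.1 = 0} rfl (fun hx hy => by simp_all) (fun hx => by simp_all),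
            mkI {p | p.1 = p.2} rfl (fun hx hy => by simp_all) (fun hx => by simp_all),
            ?_, ?_, ?_, ?_, ?_, ?_⟩
    · refine le_bot_iff.1 fun p hp => (TwoSidedIdeal.mem_bot _).2 ?_
      obtain ⟨h1, h2⟩ := (TwoSidedIdeal.mem_inf _).1 hp
      rw [TwoSidedIdeal.mem_mk'] at h1 h2
      exact Prod.ext h2 h1
    · refine le_bot_iff.1 fun p hp => (TwoSidedIdeal.mem_bot _).2 ?_
      obtain ⟨h1, h2⟩ := (TwoSidedIdeal.mem_inf _).1 hp
      rw [TwoSidedIdeal.mem_mk'] at h1 h2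
      exact Prod.ext (h2.trans h1) h1
    · refine le_bot_iff.1 fun p hp => (TwoSidedIdeal.mem_bot _).2 ?_
      obtain ⟨h1, h2⟩ := (TwoSidedIdeal.mem_inf _).1 hp
      rw [TwoSidedIdeal.mem_mk'] at h1 h2
      exact Prod.ext h1 (h2.symm.trans h1)
    · refine top_le_iff.1 fun p _ => (TwoSidedIdeal.mem_sup).2
        ⟨(p.1, 0), (TwoSidedIdeal.mem_mk' _ _ _ _ _ _ _).2 rfl,
         (0, p.2), (TwoSidedIdeal.mem_mk' _ _ _ _ _ _ _).2 rfl, by simp⟩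
    · refine top_le_iff.1 fun p _ => (TwoSidedIdeal.mem_sup).2
        ⟨(p.1 - p.2, 0), (TwoSidedIdeal.mem_mk' _ _ _ _ _ _ _).2 rfl,
         (p.2, p.2), (TwoSidedIdeal.mem_mk' _ _ _ _ _ _ _).2 rfl, by
           ext <;> simp⟩
    · refine top_le_iff.1 fun p _ => (TwoSidedIdeal.mem_sup).2
        ⟨(0, p.2 - p.1), (TwoSidedIdeal.mem_mk' _ _ _ _ _ _ _).2 rfl,
         (p.1, p.1), (TwoSidedIdeal.mem_mk' _ _ _ _ _ _ _).2 rfl, by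
           ext <;> simp⟩
  · rintro ⟨I, J, K, hIJ, hIK, hJK, sIJ, sIK, sJK⟩ r s
    have key : ∀ (A B : TwoSidedIdeal (R × R)), A ⊓ B = ⊥ →
        ∀ x y : R × R, x ∈ A → y ∈ B → x * y = 0 := by
      intro A B hAB x y hx hy
      have : x * y ∈ A ⊓ B := (TwoSidedIdeal.mem_inf _).2
        ⟨A.mul_mem_right _ _ hx, B.mul_mem_left _ _ hy⟩
      rw [hAB] at this
      exact (TwoSidedIdeal.mem_bot _).1 this
    have hJI : J ⊓ I = ⊥ := by rw [inf_comm]; exact hIJ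
    have hz : ∀ a b : R × R, a * b = 0 := by
      intro a b
      obtain ⟨i, hi, j, hj, rfl⟩ := (TwoSidedIdeal.mem_sup).1 (show a ∈ I ⊔ J by rw [sIJ]; exact TwoSidedIdeal.mem_top _)
      obtain ⟨j', hj', k, hk, rfl⟩ := (TwoSidedIdeal.mem_sup).1 (show b ∈ J ⊔ K by rw [sJK]; exact TwoSidedIdeal.mem_top _)
      obtain ⟨i', hi', k', hk', hb⟩ :=
        (TwoSidedIdeal.mem_sup).1 (show j' + k ∈ I ⊔ K by rw [sIK]; exact TwoSidedIdeal.mem_top _)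
      have e1 : i * (j' + k) = 0 := by
        rw [mul_add, key I J hIJ _ _ hi hj', key I K hIK _ _ hi hk, add_zero]
      have e2 : j * (j' + k) = 0 := by
        rw [← hb, mul_add, key J I hJI _ _ hj hi', key J K hJK _ _ hj hk', add_zero]
      rw [add_mul, e1, e2, add_zero]
    have := congrArg Prod.fst (hz (r, 0) (s, 0))
    simpa using this
end

section
/- A non-unital ring R is a zeroring (i.e. r * s = 0 for all r, s ∈ R) if and only if every non-unital subring of the product ring R × R is a two-sided ideal of R × R, i.e. every additively and multiplicatively closed additive subgroup S of R × R satisfies x * s ∈ S and s * x ∈ S for all x ∈ R × R and s ∈ S. -/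
/-- A non-unital ring `R` is a zeroring (`r * s = 0` for all `r, s`) iff every non-unital
subring `S` of the product ring `R × R` is a two-sided ideal of `R × R`, i.e.
`x * s ∈ S` and `s * x ∈ S` for all `x ∈ R × R` and `s ∈ S`. -/
theorem zeroring_iff_all_subrings_of_square_are_ideals {R : Type*} [NonUnitalRing R] :
    (∀ r s : R, r * s = 0) ↔
      ∀ S : NonUnitalSubring (R × R), ∀ x : R × R, ∀ s ∈ S, x * s ∈ S ∧ s * x ∈ S := by
  constructor
  · intro h S x s hs
    have hx : ∀ a b : R × R, a * b = 0 := by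
      intro a b
      ext <;> simp [h]
    constructor
    · rw [hx]; exact S.zero_mem
    · rw [hx]; exact S.zero_mem
  · intro h r s
    set D : NonUnitalSubring (R × R) :=
      { carrier := {p | p.1 = p.2}
        zero_mem' := rfl
        add_mem' := by intro a b ha hb; simp_all [Prod.ext_iff]
        neg_mem' := by intro a ha; simp_all [Prod.ext_iff]
        mul_mem' := by intro a b ha hb; simp_all [Prod.ext_iff] } with hD
    have hmem : ((s : R), s) ∈ D := rfl
    have := (h D (r, 0) (s, s) hmem).1
    have h2 : r * s = 0 * s := this
    simpa using h2
end

section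
/- Let θ, φ, ψ be equivalence relations on a set A such that θ ∘ φ = φ ∘ θ (θ and φ permute) and θ ≤ ψ. Then (θ ⊔ φ) ⊓ ψ = θ ⊔ (φ ⊓ ψ) in the lattice of equivalence relations on A. -/
/-- If `θ` and `φ` are permuting equivalence relations on a set `A` and `θ ≤ ψ`, then
the modular law instance `(θ ⊔ φ) ⊓ ψ = θ ⊔ (φ ⊓ ψ)` holds in the lattice of
equivalence relations on `A`. -/
theorem permuting_implies_modular_instance {A : Type*} (θ φ ψ : Setoid A)
    (hperm : ∀ a b : A, (∃ c, θ a c ∧ φ c b) ↔ ∃ c, φ a c ∧ θ c b)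
    (hle : θ ≤ ψ) :
    (θ ⊔ φ) ⊓ ψ = θ ⊔ (φ ⊓ ψ) := by
  -- the composition θ ∘ φ is an equivalence relation
  set S : Setoid A := ⟨fun a b => ∃ c, θ a c ∧ φ c b, by
    constructor
    · intro a; exact ⟨a, θ.refl a, φ.refl a⟩
    · rintro a b ⟨c, h1, h2⟩
      exact (hperm b a).mpr ⟨c, φ.symm h2, θ.symm h1⟩
    · rintro a b e ⟨c, h1, h2⟩ ⟨d, h3, h4⟩
      obtain ⟨d', h5, h6⟩ := (hperm c d).mpr ⟨b, h2, h3⟩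
      exact ⟨d', θ.trans h1 h5, φ.trans h6 h4⟩⟩ with hS
  have hsup : θ ⊔ φ ≤ S := by
    apply sup_le
    · intro a b h; exact ⟨b, h, φ.refl b⟩
    · intro a b h; exact ⟨a, θ.refl a, h⟩
  apply le_antisymm
  · rintro a b ⟨h1, h2⟩
    obtain ⟨c, hac, hcb⟩ := hsup h1
    have hψ : ψ c b := ψ.trans (ψ.symm (hle hac)) h2
    exact (θ ⊔ (φ ⊓ ψ)).trans (le_sup_left (a := θ) (b := φ ⊓ ψ) hac)
      (le_sup_right (a := θ) (b := φ ⊓ ψ) ⟨hcb, hψ⟩)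
  · apply le_inf
    · exact sup_le_sup_left inf_le_left θ
    · exact sup_le hle inf_le_right
end

section
/- Let A be a set, let p : A × A × A → A be a Mal'tsev operation (p(x,x,y) = y and p(x,y,y) = x for all x, y ∈ A), and let θ, φ be equivalence relations on A that are both compatible with p. Then θ ∘ φ = φ ∘ θ. -/
/-- If a set `A` carries a Mal'tsev operation `p` (so `p x x y = y` and `p x y y = x`)
and `θ, φ` are equivalence relations on `A` compatible with `p`, then `θ` and `φ`
permute: `θ ∘ φ = φ ∘ θ`. -/
theorem maltsev_implies_permuting {A : Type*} (p : A → A → A → A)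
    (hp1 : ∀ x y : A, p x x y = y) (hp2 : ∀ x y : A, p x y y = x)
    (θ φ : Setoid A)
    (hθ : ∀ x₁ y₁ x₂ y₂ x₃ y₃ : A,
      θ x₁ y₁ → θ x₂ y₂ → θ x₃ y₃ → θ (p x₁ x₂ x₃) (p y₁ y₂ y₃))
    (hφ : ∀ x₁ y₁ x₂ y₂ x₃ y₃ : A,
      φ x₁ y₁ → φ x₂ y₂ → φ x₃ y₃ → φ (p x₁ x₂ x₃) (p y₁ y₂ y₃)) :
    ∀ a b : A, (∃ c, θ a c ∧ φ c b) ↔ ∃ c, φ a c ∧ θ c b := by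
  intro a b
  constructor
  · rintro ⟨c, hac, hcb⟩
    refine ⟨p a c b, ?_, ?_⟩
    · have := hφ a a c b b b (φ.refl a) hcb (φ.refl b)
      rw [hp2] at this
      exact φ.symm this
    · have := hθ a c c c b b hac (θ.refl c) (θ.refl b)
      rw [hp1] at this
      exact this
  · rintro ⟨c, hac, hcb⟩
    refine ⟨p a c b, ?_, ?_⟩
    · have := hθ a a c b b b (θ.refl a) hcb (θ.refl b)
      rw [hp2] at this
      exact θ.symm this
    · have := hφ a c c c b b hac (φ.refl c) (φ.refl b)
      rw [hp1] at this
      exact this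
end

section
/- Let A be a nonempty set and let t : A × A × A → A. Then the following are equivalent: (a) t is a Mal'tsev operation (t(x,x,y) = y and t(x,y,y) = x for all x, y ∈ A) and t commutes with itself; (b) there exists an abelian group structure (A, +, −, 0) on A such that t(x,y,z) = x − y + z for all x, y, z ∈ A. -/
/-- A ternary operation `t` on a nonempty set `A` is a self-commuting Mal'tsev operation
(i.e. `(A, t)` is a ternary Abelian group) iff there is an abelian group structure on `A`
with `t x y z = x - y + z`. -/
theorem ternary_abelian_group_iff_affine {A : Type*} [Nonempty A] (t : A → A → A → A) :
    ((∀ x y : A, t x x y = y) ∧ (∀ x y : A, t x y y = x) ∧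
      (∀ x₁₁ x₁₂ x₁₃ x₂₁ x₂₂ x₂₃ x₃₁ x₃₂ x₃₃ : A,
        t (t x₁₁ x₁₂ x₁₃) (t x₂₁ x₂₂ x₂₃) (t x₃₁ x₃₂ x₃₃) =
          t (t x₁₁ x₂₁ x₃₁) (t x₁₂ x₂₂ x₃₂) (t x₁₃ x₂₃ x₃₃))) ↔
      ∃ _ : AddCommGroup A, ∀ x y z : A, t x y z = x - y + z := by
  constructor
  · rintro ⟨h1, h2, hc⟩
    obtain ⟨e⟩ := ‹Nonempty A›
    letI : Add A := ⟨fun a b => t a e b⟩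
    letI : Zero A := ⟨e⟩
    letI : Neg A := ⟨fun a => t e a e⟩
    refine ⟨{ add := (· + ·)
              zero := (0 : A)
              neg := (- ·)
              nsmul := nsmulRec
              zsmul := zsmulRec
              add_assoc := ?_
              zero_add := ?_
              add_zero := ?_
              neg_add_cancel := ?_
              add_comm := ?_ }, ?_⟩
    · intro a b c
      show t (t a e b) e c = t a e (t b e c)
      have := hc a e b e e e e e c
      simpa [h1, h2] using this
    · intro a; exact h1 e a
    · intro a; exact h2 a e
    · intro a
      show t (t e a e) e a = e
      have := hc e a e e e e e e a
      simpa [h1, h2] using this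
    · intro a b
      show t a e b = t b e a
      have := hc e e a e e e b e e
      simpa [h1, h2] using this
    · intro x y z
      show t x y z = t (t x e (t e y e)) e z
      have hsub : t x e (t e y e) = t x y e := by
        have := hc x e e e e e e y e
        simpa [h1, h2] using this
      have hmain : t (t x y e) e z = t x y z := by
        have := hc x y e e e e e e z
        simpa [h1, h2] using this
      rw [hsub, hmain]
  · rintro ⟨g, hg⟩
    refine ⟨fun x y => by rw [hg]; abel, fun x y => by rw [hg]; abel,
      fun a b c d e f x y z => by simp only [hg]; abel⟩
end

section
/- Let A be a set, let n ∈ ℕ, and let m₀, …, mₙ : A⁴ → A be operations satisfying the Day identities on A: (D1) m₀(x,y,z,u) = x; (D2) mᵢ(x,y,y,x) = x for all 0 ≤ i ≤ n; (D3) mᵢ(x,x,z,z) = mᵢ₊₁(x,x,z,z) for all even i < n; (D4) mᵢ(x,y,y,u) = mᵢ₊₁(x,y,y,u) for all odd i < n; (D5) mₙ(x,y,z,u) = u, for all x, y, z, u ∈ A. Let γ be an equivalence relation on A compatible with each mᵢ, and let a, b, c, d ∈ A with b γ d. Then a γ c if and only if mᵢ(a,a,c,c) γ mᵢ(a,b,d,c)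 for all 0 ≤ i ≤ n. -/
/-- Let `m 0, …, m n : A⁴ → A` satisfy the Day identities (D1)–(D5) on a set `A`, let `γ`
be an equivalence relation on `A` compatible with each `m i` (`i ≤ n`), and let
`a, b, c, d ∈ A` with `b γ d`. Then `a γ c` iff `m i a a c c γ m i a b d c` for all
`i ≤ n`. -/
theorem day_terms_commutator_criterion {A : Type*} (n : ℕ)
    (m : ℕ → A → A → A → A → A)
    (hD1 : ∀ x y z u : A, m 0 x y z u = x)
    (hD2 : ∀ i ≤ n, ∀ x y : A, m i x y y x = x)
    (hD3 : ∀ i < n, Even i → ∀ x z : A, m i x x z z = m (i + 1) x x z z)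
    (hD4 : ∀ i < n, Odd i → ∀ x y u : A, m i x y y u = m (i + 1) x y y u)
    (hD5 : ∀ x y z u : A, m n x y z u = u)
    (γ : Setoid A)
    (hcompat : ∀ i ≤ n, ∀ x₁ y₁ x₂ y₂ x₃ y₃ x₄ y₄ : A,
      γ x₁ y₁ → γ x₂ y₂ → γ x₃ y₃ → γ x₄ y₄ →
        γ (m i x₁ x₂ x₃ x₄) (m i y₁ y₂ y₃ y₄))
    (a b c d : A) (hbd : γ b d) :
    γ a c ↔ ∀ i ≤ n, γ (m i a a c c) (m i a b d c) := by
  constructor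
  · intro hac i hi
    have h1 : γ (m i a a c c) a := by
      have := hcompat i hi a a a a c a c a (γ.refl a) (γ.refl a) (γ.symm hac) (γ.symm hac)
      rwa [hD2 i hi] at this
    have h2 : γ (m i a b d c) a := by
      have := hcompat i hi a a b b d b c a (γ.refl a) (γ.refl b) (γ.symm hbd) (γ.symm hac)
      rwa [hD2 i hi] at this
    exact γ.trans h1 (γ.symm h2)
  · intro h
    have key : ∀ i, i ≤ n → γ a (m i a b d c) := by
      intro i
      induction i with
      | zero => intro _; rw [hD1]
      | succ k ih =>
        intro hk
        have hkn : k < n := hk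
        have hk' : k ≤ n := le_of_lt hkn
        have hprev := ih hk'
        rcases Nat.even_or_odd k with he | ho
        · have e3 := hD3 k hkn he a c
          have h1 := h k hk'
          have h2 := h (k+1) hk
          exact γ.trans hprev (γ.trans (γ.symm h1) (by rw [e3]; exact h2))
        · have e4 := hD4 k hkn ho a b c
          have c1 := hcompat k hk' a a b b d b c c (γ.refl a) (γ.refl b) (γ.symm hbd) (γ.refl c)
          have c2 := hcompat (k+1) hk a a b b b d c c (γ.refl a) (γ.refl b) hbd (γ.refl c)
          exact γ.trans hprev (γ.trans c1 (by rw [e4]; exact c2))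
    have := key n le_rfl
    rwa [hD5] at this
end
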